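/- Fix an integer n ≥ 1. Let Y₁,…,Yₙ be independent real-valued random variables on a probability space such that P(Y_i ≤ y) ≤ y for all y ∈ [0,1] and each Y_i takes values in (0,1] almost surely. Then for every ε > 0, P(Σ_{i=1}^n log(1/Y_i) ≥ ε) ≤ f_n(ε), where f_n(x) := Σ_{i=1}^n x^{i−1} e^{−x}/(i−1)!. (Lemma 7 of the paper.) -/

import Mathlib

open MeasureTheory

open Real Set ProbabilityTheory

section
variable {Ω : Type*} [MeasurableSpace Ω] (μ : Measure Ω) [IsProbabilityMeasure μ]

private lemma tail_single
    (Z : Ω → ℝ) (hcdf : ∀ y ∈ Icc (0:ℝ) 1, μ {ω | Z ω ≤ y} ≤ ENNReal.ofReal y)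
    (hrange : ∀ᵐ ω ∂μ, Z ω ∈ Ioc (0:ℝ) 1) (t : ℝ) :
    μ {ω | t ≤ Real.log (1 / Z ω)} ≤ ENNReal.ofReal (min 1 (Real.exp (-t))) := by
  rcases le_or_gt t 0 with ht | ht
  · have h1 : min 1 (Real.exp (-t)) = 1 := min_eq_left (Real.one_le_exp (by linarith))
    rw [h1, ENNReal.ofReal_one]
    exact prob_le_one
  · have hm : min 1 (Real.exp (-t)) = Real.exp (-t) :=
      min_eq_right (Real.exp_le_one_iff.mpr (by linarith))
    rw [hm]
    have hsub : μ {ω | t ≤ Real.log (1 / Z ω)} ≤ μ {ω | Z ω ≤ Real.exp (-t)} := by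
      apply measure_mono_ae
      filter_upwards [hrange] with ω hω h
      have hz : 0 < Z ω := hω.1
      simp only [Set.mem_setOf_eq, one_div, Real.log_inv] at h ⊢
      have h' : t ≤ -Real.log (Z ω) := h
      have hlog : Real.log (Z ω) ≤ -t := by linarith
      calc Z ω = Real.exp (Real.log (Z ω)) := (Real.exp_log hz).symm
        _ ≤ Real.exp (-t) := Real.exp_le_exp.mpr hlog
    exact hsub.trans (hcdf _ ⟨(Real.exp_pos _).le, Real.exp_le_one_iff.mpr (by linarith)⟩)

private lemma hasDerivAt_term (ε : ℝ) (i : ℕ) {t : ℝ} (ht : 0 < t) :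
    HasDerivAt (fun u => Real.exp (-ε) * (ε + Real.log u)^(i+1) / (Nat.factorial (i+1)))
      ((ε + Real.log t)^i * Real.exp (-(ε + Real.log t)) / (Nat.factorial i)) t := by
  have hl : HasDerivAt (fun u => ε + Real.log u) t⁻¹ t := (Real.hasDerivAt_log ht.ne').const_add ε
  have hp : HasDerivAt (fun u => (ε + Real.log u)^(i+1))
      (((i+1 : ℕ) : ℝ) * (ε + Real.log t)^i * t⁻¹) t := by
    simpa using hl.fun_pow (i+1)
  have h2 := (hp.const_mul (Real.exp (-ε))).div_const ((Nat.factorial (i+1) : ℝ))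
  refine h2.congr_deriv ?_
  have hexp : Real.exp (-(ε + Real.log t)) = Real.exp (-ε) * t⁻¹ := by
    rw [neg_add, Real.exp_add]; congr 1; rw [Real.exp_neg, Real.exp_log ht]
  rw [hexp, Nat.factorial_succ]
  have hfi : (Nat.factorial i : ℝ) ≠ 0 := Nat.cast_ne_zero.mpr (Nat.factorial_ne_zero i)
  push_cast
  field_simp

private lemma ftc_piece (ε : ℝ) (hε : 0 < ε) (m : ℕ) :
    ∫ t in (Real.exp (-ε))..1,
      (∑ i ∈ Finset.range m, (ε + Real.log t)^i * Real.exp (-(ε + Real.log t)) / (Nat.factorial i))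
      = ∑ i ∈ Finset.range m, Real.exp (-ε) * ε^(i+1) / (Nat.factorial (i+1)) := by
  have ha : (0:ℝ) < Real.exp (-ε) := Real.exp_pos _
  have hab : Real.exp (-ε) ≤ 1 := Real.exp_le_one_iff.mpr (by linarith)
  have hpos : ∀ x ∈ uIcc (Real.exp (-ε)) 1, 0 < x := by
    intro x hx
    rw [uIcc_of_le hab] at hx
    exact lt_of_lt_of_le ha hx.1
  have hderiv : ∀ x ∈ uIcc (Real.exp (-ε)) 1,
      HasDerivAt (fun t => ∑ i ∈ Finset.range m,
          Real.exp (-ε) * (ε + Real.log t)^(i+1) / (Nat.factorial (i+1)))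
        (∑ i ∈ Finset.range m,
          (ε + Real.log x)^i * Real.exp (-(ε + Real.log x)) / (Nat.factorial i)) x := by
    intro x hx
    exact HasDerivAt.fun_sum (fun i _ => hasDerivAt_term ε i (hpos x hx))
  have hcont : ContinuousOn (fun t : ℝ => ∑ i ∈ Finset.range m,
      (ε + Real.log t)^i * Real.exp (-(ε + Real.log t)) / (Nat.factorial i))
      (uIcc (Real.exp (-ε)) 1) := by
    apply continuousOn_finset_sum
    intro i _
    have hlog : ContinuousOn (fun t : ℝ => ε + Real.log t) (uIcc (Real.exp (-ε)) 1) :=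
      continuousOn_const.add (Real.continuousOn_log.mono (fun x hx => (hpos x hx).ne'))
    exact ((hlog.pow i).mul ((Real.continuous_exp.comp_continuousOn hlog.neg))).div_const _
  have hint : IntervalIntegrable (fun t : ℝ => ∑ i ∈ Finset.range m,
      (ε + Real.log t)^i * Real.exp (-(ε + Real.log t)) / (Nat.factorial i))
      volume (Real.exp (-ε)) 1 := hcont.intervalIntegrable
  rw [intervalIntegral.integral_eq_sub_of_hasDerivAt hderiv hint]
  rw [Real.log_one, Real.log_exp]
  simp [add_neg_cancel]

private lemma key {n : ℕ} (Y : Fin n → Ω → ℝ) (hmeas : ∀ i, Measurable (Y i))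
    (hindep : iIndepFun Y μ)
    (hcdf : ∀ i, ∀ y ∈ Icc (0:ℝ) 1, μ {ω | Y i ω ≤ y} ≤ ENNReal.ofReal y)
    (hrange : ∀ i, ∀ᵐ ω ∂μ, Y i ω ∈ Ioc (0:ℝ) 1)
    (s : Finset (Fin n)) :
    ∀ ε : ℝ, 0 < ε →
      μ {ω | ε ≤ ∑ i ∈ s, Real.log (1 / Y i ω)} ≤
        ENNReal.ofReal (∑ i ∈ Finset.range s.card, ε ^ i * Real.exp (-ε) / (Nat.factorial i)) := by
  classical
  induction s using Finset.induction_on with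
  | empty =>
    intro ε hε
    simp [hε.not_ge]
  | @insert a s ha IH =>
    intro ε hε
    have hXmeas : ∀ i, Measurable (fun ω => Real.log (1 / Y i ω)) := fun i =>
      Real.measurable_log.comp (measurable_const.div (hmeas i))
    set S : Ω → ℝ := fun ω => ∑ i ∈ s, Real.log (1 / Y i ω) with hSdef
    set Xa : Ω → ℝ := fun ω => Real.log (1 / Y a ω) with hXadef
    have hS : Measurable S := by
      apply Finset.measurable_sum
      exact fun i _ => hXmeas i
    have hXa : Measurable Xa := hXmeas a
    haveI : IsProbabilityMeasure (μ.map S) := Measure.isProbabilityMeasure_map hS.aemeasurable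
    haveI : IsProbabilityMeasure (μ.map Xa) := Measure.isProbabilityMeasure_map hXa.aemeasurable
    have hXindep : iIndepFun (fun i ω => Real.log (1 / Y i ω)) μ := by
      have h := hindep.comp (fun _ (y : ℝ) => Real.log (1 / y))
        (fun _ => Real.measurable_log.comp (measurable_const.div measurable_id))
      exact h
    have hInd : IndepFun S Xa μ := by
      have h := hXindep.indepFun_finsetSum_of_notMem hXmeas ha
      have hfun : (∑ j ∈ s, fun ω => Real.log (1 / Y j ω)) = S := by
        funext ω; simp [hSdef, Finset.sum_apply]
      rwa [hfun] at h
    have hev : {ω | ε ≤ ∑ i ∈ insert a s, Real.log (1 / Y i ω)} = {ω | ε ≤ S ω + Xa ω} := by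
      ext ω
      simp only [Set.mem_setOf_eq, Finset.sum_insert ha, hSdef, hXadef]
      constructor <;> intro h <;> linarith
    rw [hev, Finset.card_insert_of_notMem ha]
    set m := s.card with hm
    have hA' : MeasurableSet {p : ℝ × ℝ | ε ≤ p.1 + p.2} :=
      measurableSet_le measurable_const (measurable_fst.add measurable_snd)
    -- definition of the majorant g
    set g : ℝ → ℝ := fun t =>
      if 1 ≤ t then 0
      else if t ≤ Real.exp (-ε) then 1
      else ∑ i ∈ Finset.range m, (ε + Real.log t)^i * Real.exp (-(ε + Real.log t)) / (Nat.factorial i)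
      with hgdef
    have hgmeas : Measurable fun t => ENNReal.ofReal (g t) := by
      apply ENNReal.measurable_ofReal.comp
      apply Measurable.ite (measurableSet_le measurable_const measurable_id) measurable_const
      apply Measurable.ite (measurableSet_le measurable_id measurable_const) measurable_const
      apply Finset.measurable_sum
      intro i _
      exact (((measurable_const.add Real.measurable_log).pow_const i).mul
        (Real.measurable_exp.comp (measurable_const.add Real.measurable_log).neg)).div_const _
    calc μ {ω | ε ≤ S ω + Xa ω}
        = (μ.map fun ω => (S ω, Xa ω)) {p : ℝ × ℝ | ε ≤ p.1 + p.2} := by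
          rw [Measure.map_apply (hS.prodMk hXa) hA']; rfl
      _ = ((μ.map S).prod (μ.map Xa)) {p : ℝ × ℝ | ε ≤ p.1 + p.2} := by
          rw [(indepFun_iff_map_prod_eq_prod_map_map hS.aemeasurable hXa.aemeasurable).mp hInd]
      _ = ∫⁻ u, (μ.map Xa) {x | ε ≤ u + x} ∂(μ.map S) := by
          rw [Measure.prod_apply hA']; rfl
      _ ≤ ∫⁻ u, ENNReal.ofReal (min 1 (Real.exp (u - ε))) ∂(μ.map S) := by
          apply lintegral_mono
          intro u
          dsimp only
          rw [Measure.map_apply hXa (show MeasurableSet {x : ℝ | ε ≤ u + x} from measurableSet_le measurable_const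
            (measurable_const.add measurable_id'))]
          have hpre : Xa ⁻¹' {x | ε ≤ u + x} = {ω | ε - u ≤ Xa ω} := by
            ext ω
            simp only [Set.mem_preimage, Set.mem_setOf_eq]
            constructor <;> intro h <;> linarith
          rw [hpre]
          have htail := tail_single μ (Y a) (hcdf a) (hrange a) (ε - u)
          rw [neg_sub] at htail
          exact htail
      _ = ∫⁻ ω, ENNReal.ofReal (min 1 (Real.exp (S ω - ε))) ∂μ := by
          have hmf : Measurable fun u : ℝ => ENNReal.ofReal (min 1 (Real.exp (u - ε))) := by
            fun_prop
          exact lintegral_map hmf hS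
      _ = ∫⁻ t in Ioi (0:ℝ), μ {ω | t < min 1 (Real.exp (S ω - ε))} := by
          exact lintegral_eq_lintegral_meas_lt μ
            (Filter.Eventually.of_forall fun ω => le_min zero_le_one (Real.exp_pos _).le)
            ((measurable_const.min (Real.measurable_exp.comp (hS.sub measurable_const))).aemeasurable)
      _ ≤ ∫⁻ t in Ioi (0:ℝ), ENNReal.ofReal (g t) := by
          apply setLIntegral_mono hgmeas
          intro t ht
          have ht0 : (0:ℝ) < t := ht
          rcases le_or_gt 1 t with h1 | h1
          · have hempty : {ω | t < min 1 (Real.exp (S ω - ε))} = ∅ := by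
              ext ω
              simp only [Set.mem_setOf_eq, Set.mem_empty_iff_false, iff_false, not_lt]
              exact le_trans (min_le_left _ _) h1
            rw [hempty]
            simp [hgdef, h1]
          · have hset : {ω | t < min 1 (Real.exp (S ω - ε))} = {ω | ε + Real.log t < S ω} := by
              ext ω
              simp only [Set.mem_setOf_eq, lt_min_iff]
              constructor
              · rintro ⟨-, h2⟩
                have := (Real.log_lt_iff_lt_exp ht0).mpr h2
                linarith
              · intro h2
                refine ⟨h1, ?_⟩
                have hlt : Real.log t < S ω - ε := by linarith
                exact (Real.log_lt_iff_lt_exp ht0).mp hlt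
            rw [hset]
            rcases le_or_gt t (Real.exp (-ε)) with h2 | h2
            · have hg1 : g t = 1 := by simp [hgdef, not_le.mpr h1, h2]
              rw [hg1, ENNReal.ofReal_one]
              exact prob_le_one
            · have hεt : 0 < ε + Real.log t := by
                have := (Real.lt_log_iff_exp_lt ht0).mpr h2
                linarith
              have hg2 : g t = ∑ i ∈ Finset.range m,
                  (ε + Real.log t)^i * Real.exp (-(ε + Real.log t)) / (Nat.factorial i) := by
                simp [hgdef, not_le.mpr h1, not_le.mpr h2]
              rw [hg2]
              calc μ {ω | ε + Real.log t < S ω}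
                  ≤ μ {ω | ε + Real.log t ≤ S ω} := measure_mono (Set.setOf_subset_setOf.mpr fun ω => le_of_lt)
                _ ≤ _ := IH (ε + Real.log t) hεt
      _ = ENNReal.ofReal (Real.exp (-ε) + ∑ i ∈ Finset.range m,
            Real.exp (-ε) * ε^(i+1) / (Nat.factorial (i+1))) := by
          have ha0 : (0:ℝ) < Real.exp (-ε) := Real.exp_pos _
          have hab : Real.exp (-ε) < 1 := Real.exp_lt_one_iff.mpr (by linarith)
          have hpart : Ioi (0:ℝ) = Ioc 0 (Real.exp (-ε)) ∪ (Ioo (Real.exp (-ε)) 1 ∪ Ici 1) := by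
            ext x
            simp only [mem_Ioi, mem_union, mem_Ioc, mem_Ioo, mem_Ici]
            constructor
            · intro hx
              rcases le_or_gt x (Real.exp (-ε)) with h | h
              · exact Or.inl ⟨hx, h⟩
              · rcases lt_or_ge x 1 with h' | h'
                · exact Or.inr (Or.inl ⟨h, h'⟩)
                · exact Or.inr (Or.inr h')
            · rintro (⟨h, -⟩ | ⟨h, -⟩ | h)
              · exact h
              · linarith
              · linarith
          have hd1 : Disjoint (Ioc (0:ℝ) (Real.exp (-ε))) (Ioo (Real.exp (-ε)) 1 ∪ Ici 1) := by
            rw [Set.disjoint_left]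
            rintro x ⟨-, hx2⟩ (⟨h, -⟩ | h)
            · linarith
            · rw [mem_Ici] at h
              linarith
          have hd2 : Disjoint (Ioo (Real.exp (-ε)) 1) (Ici (1:ℝ)) := by
            rw [Set.disjoint_left]
            rintro x ⟨-, hx2⟩ h
            rw [mem_Ici] at h
            linarith
          rw [hpart, lintegral_union (measurableSet_Ioo.union measurableSet_Ici) hd1,
              lintegral_union measurableSet_Ici hd2]
          have hp1 : ∫⁻ t in Ioc (0:ℝ) (Real.exp (-ε)), ENNReal.ofReal (g t)
              = ENNReal.ofReal (Real.exp (-ε)) := by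
            have hc : ∀ᵐ (t : ℝ) ∂volume, t ∈ Ioc (0:ℝ) (Real.exp (-ε)) →
                ENNReal.ofReal (g t) = 1 := by
              refine Filter.Eventually.of_forall fun t ht => ?_
              have h1 : ¬ (1:ℝ) ≤ t := not_le.mpr (lt_of_le_of_lt ht.2 hab)
              simp [hgdef, h1, ht.2]
            rw [setLIntegral_congr_fun_ae measurableSet_Ioc hc, setLIntegral_const, one_mul,
              Real.volume_Ioc, sub_zero]
          have hp3 : ∫⁻ t in Ici (1:ℝ), ENNReal.ofReal (g t) = 0 := by
            have hc : ∀ᵐ (t : ℝ) ∂volume, t ∈ Ici (1:ℝ) → ENNReal.ofReal (g t) = 0 := by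
              refine Filter.Eventually.of_forall fun t ht => ?_
              rw [mem_Ici] at ht
              simp [hgdef, ht]
            rw [setLIntegral_congr_fun_ae measurableSet_Ici hc, lintegral_zero]
          have hp2 : ∫⁻ t in Ioo (Real.exp (-ε)) 1, ENNReal.ofReal (g t)
              = ENNReal.ofReal (∑ i ∈ Finset.range m,
                  Real.exp (-ε) * ε^(i+1) / (Nat.factorial (i+1))) := by
            set h : ℝ → ℝ := fun t => ∑ i ∈ Finset.range m,
              (ε + Real.log t)^i * Real.exp (-(ε + Real.log t)) / (Nat.factorial i) with hhdef
            have hc : ∀ᵐ (t : ℝ) ∂volume, t ∈ Ioo (Real.exp (-ε)) 1 →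
                ENNReal.ofReal (g t) = ENNReal.ofReal (h t) := by
              refine Filter.Eventually.of_forall fun t ht => ?_
              simp only [hgdef, hhdef, not_le.mpr ht.2, if_false, not_le.mpr ht.1]
            rw [setLIntegral_congr_fun_ae measurableSet_Ioo hc]
            have hcont : ContinuousOn h (Icc (Real.exp (-ε)) 1) := by
              apply continuousOn_finset_sum
              intro i _
              have hlog : ContinuousOn (fun t : ℝ => ε + Real.log t) (Icc (Real.exp (-ε)) 1) :=
                continuousOn_const.add (Real.continuousOn_log.mono
                  (fun x hx => ne_of_gt (lt_of_lt_of_le ha0 hx.1)))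
              exact ((hlog.pow i).mul
                (Real.continuous_exp.comp_continuousOn hlog.neg)).div_const _
            have hint : IntegrableOn h (Ioo (Real.exp (-ε)) 1) volume :=
              (hcont.integrableOn_Icc).mono_set Ioo_subset_Icc_self
            have hnn : 0 ≤ᵐ[volume.restrict (Ioo (Real.exp (-ε)) 1)] h := by
              filter_upwards [ae_restrict_mem measurableSet_Ioo] with t ht
              have h0t : 0 < t := lt_trans ha0 ht.1
              have hlt : 0 ≤ ε + Real.log t := by
                have := (Real.lt_log_iff_exp_lt h0t).mpr ht.1
                linarith
              apply Finset.sum_nonneg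
              intro i _
              exact div_nonneg (mul_nonneg (pow_nonneg hlt i) (Real.exp_pos _).le)
                (Nat.cast_nonneg _)
            rw [← ofReal_integral_eq_lintegral_ofReal hint hnn]
            congr 1
            rw [← integral_Ioc_eq_integral_Ioo, ← intervalIntegral.integral_of_le hab.le]
            exact ftc_piece ε hε m
          rw [hp1, hp2, hp3, add_zero,
            ← ENNReal.ofReal_add (le_of_lt ha0)
              (Finset.sum_nonneg fun i _ => by positivity)]
      _ = ENNReal.ofReal (∑ i ∈ Finset.range (m+1), ε ^ i * Real.exp (-ε) / (Nat.factorial i)) := by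
          congr 1
          rw [Finset.sum_range_succ']
          simp only [pow_zero, one_mul, Nat.factorial_zero, Nat.cast_one, div_one]
          rw [add_comm]
          congr 1
          exact Finset.sum_congr rfl fun i _ => by ring

end


/-- Lemma 7: if `Y₁,…,Yₙ` are independent, valued in `(0,1]` a.s., and stochastically
dominate the uniform distribution (`P(Y_i ≤ y) ≤ y` on `[0,1]`), then
`P(∑ log(1/Y_i) ≥ ε) ≤ f_n(ε)` where `f_n(x) = ∑_{i=1}^n x^{i-1} e^{-x}/(i-1)!`. -/
theorem stmt14 {Ω : Type*} [MeasurableSpace Ω] (μ : Measure Ω) [IsProbabilityMeasure μ]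
    (n : ℕ) (hn : 1 ≤ n) (Y : Fin n → Ω → ℝ)
    (hmeas : ∀ i, Measurable (Y i))
    (hindep : ProbabilityTheory.iIndepFun Y μ)
    (hcdf : ∀ i, ∀ y ∈ Set.Icc (0 : ℝ) 1, μ {ω | Y i ω ≤ y} ≤ ENNReal.ofReal y)
    (hrange : ∀ i, ∀ᵐ ω ∂μ, Y i ω ∈ Set.Ioc (0 : ℝ) 1) :
    ∀ ε : ℝ, 0 < ε →
      μ {ω | ε ≤ ∑ i, Real.log (1 / Y i ω)} ≤
        ENNReal.ofReal (∑ i ∈ Finset.range n, ε ^ i * Real.exp (-ε) / (Nat.factorial i)) := by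
  intro ε hε
  have h := key μ Y hmeas hindep hcdf hrange Finset.univ ε hε
  simpa [Finset.card_univ] using h
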